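/- Let G be a tournament with source s and sink t in which every vertex and arc lies on a directed s-t path. Let T be the set of all vertices x such that for some arc (a,b), x is an out-neighbor of a and in-neighbor of b, and there exists a directed s-t path in G - x using (a,b). Then T is a tracking set for G, and moreover every tracking set contains T, so T is minimum. -/

import Mathlib

noncomputable def trackSeq {V : Type} (T : Set V) (l : List V) : List V :=
  l.filter (fun v => @decide (v ∈ T) (Classical.propDecidable _))

/-- A directed walk from `s` to `t` in the digraph given by the arc relation `A`,
recorded as its list of vertices. -/
def IsDiwalk {V : Type} (A : V → V → Prop) (s t : V) (l : List V) : Prop :=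
  l ≠ [] ∧ l.Chain' A ∧ l.head? = some s ∧ l.getLast? = some t

/-- A simple directed path from `s` to `t`. -/
def IsDipath {V : Type} (A : V → V → Prop) (s t : V) (l : List V) : Prop :=
  IsDiwalk A s t l ∧ l.Nodup

/-- A tournament: no self-loops and exactly one arc between any two distinct vertices. -/
def IsTournament {V : Type} (A : V → V → Prop) : Prop :=
  (∀ v, ¬ A v v) ∧ (∀ u v : V, u ≠ v → (A u v ↔ ¬ A v u))

/-- The walk `l` uses the arc `(a, b)`. -/
def ArcIn {V : Type} (a b : V) (l : List V) : Prop :=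
  ∃ l1 l2 : List V, l = l1 ++ a :: b :: l2

/-- `T` is a tracking set for directed `s`-`t` paths. -/
def IsDiTrackingSet {V : Type} (A : V → V → Prop) (s t : V) (T : Set V) : Prop :=
  ∀ p q : List V, IsDipath A s t p → IsDipath A s t q →
    trackSeq T p = trackSeq T q → p = q

/-- Every vertex and every arc of the digraph lies on some directed `s`-`t` path. -/
def DiReduced {V : Type} (A : V → V → Prop) (s t : V) : Prop :=
  (∀ v : V, ∃ l : List V, IsDipath A s t l ∧ v ∈ l) ∧
  (∀ a b : V, A a b → ∃ l : List V, IsDipath A s t l ∧ ArcIn a b l)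

/-- The forced trackers: vertices `x` such that for some arc `(a,b)`, `x` is an
out-neighbour of `a` and in-neighbour of `b`, and some `s`-`t` path avoiding `x` uses `(a,b)`. -/
def diForcedSet {V : Type} (A : V → V → Prop) (s t : V) : Set V :=
  {x | ∃ a b : V, A a b ∧ A a x ∧ A x b ∧
    ∃ l : List V, IsDipath A s t l ∧ x ∉ l ∧ ArcIn a b l}

/-- In a nodup list with head `s`, no arc of the list enters `s`. -/
lemma aux_no_arc_into_head {V : Type} {l : List V} {s a : V}
    (hn : l.Nodup) (hh : l.head? = some s) (h : ArcIn a s l) : False := by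
  obtain ⟨l1, l2, rfl⟩ := h
  cases l1 with
  | nil =>
    simp only [List.nil_append, List.head?_cons, Option.some.injEq] at hh
    subst hh
    simp at hn
  | cons h1 l1 =>
    simp only [List.cons_append, List.head?_cons, Option.some.injEq] at hh
    subst hh
    rw [List.cons_append, List.nodup_cons] at hn
    exact hn.1 (by simp)

/-- In a nodup list with last element `t`, no arc of the list leaves `t`. -/
lemma aux_no_arc_out_last {V : Type} {l : List V} {t b : V}
    (hn : l.Nodup) (hl : l.getLast? = some t) (h : ArcIn t b l) : False := by
  obtain ⟨l1, l2, rfl⟩ := h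
  have he : l1 ++ t :: b :: l2 = (l1 ++ [t]) ++ b :: l2 := by simp
  rw [he] at hn hl
  rw [List.getLast?_append] at hl
  have hb : (b :: l2).getLast? = some ((b :: l2).getLast (by simp)) :=
    List.getLast?_eq_getLast _
  rw [hb] at hl
  simp only [Option.some_or, Option.some.injEq] at hl
  have htmem : t ∈ b :: l2 := hl ▸ List.getLast_mem _
  rw [List.nodup_append] at hn
  exact hn.2.2 t (by simp) t htmem rfl

lemma aux_dipath_decomp {V : Type} {A : V → V → Prop} {s t : V} {p : List V}
    (hp : IsDipath A s t p) (hst : s ≠ t) :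
    ∃ mid : List V, p = s :: (mid ++ [t]) ∧ s ∉ mid ∧ t ∉ mid := by
  obtain ⟨⟨hne, _, hh, hl⟩, hnd⟩ := hp
  cases p with
  | nil => exact absurd rfl hne
  | cons hd tl =>
    simp only [List.head?_cons, Option.some.injEq] at hh
    subst hh
    have htl : tl ≠ [] := by
      rintro rfl
      simp only [List.getLast?_singleton, Option.some.injEq] at hl
      exact hst hl
    have hlast : tl.getLast htl = t := by
      rw [List.getLast?_eq_getLast (l := hd :: tl) (by simp), Option.some.injEq,
        List.getLast_cons htl] at hl
      exact hl
    refine ⟨tl.dropLast, ?_, ?_, ?_⟩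
    · rw [← hlast, List.dropLast_append_getLast htl]
    · rw [List.nodup_cons] at hnd
      intro hmem
      exact hnd.1 (List.dropLast_subset tl hmem)
    · rw [List.nodup_cons, ← List.dropLast_append_getLast htl, hlast,
        List.nodup_append] at hnd
      intro hmem
      exact hnd.2.2.2 t hmem t (by simp) rfl

theorem stmt7 {V : Type} [Fintype V] (A : V → V → Prop) (htour : IsTournament A)
    (s t : V) (hred : DiReduced A s t) :
    IsDiTrackingSet A s t (diForcedSet A s t) ∧
    (∀ T' : Set V, IsDiTrackingSet A s t T' → diForcedSet A s t ⊆ T') ∧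
    (∀ T' : Set V, IsDiTrackingSet A s t T' →
      (diForcedSet A s t).ncard ≤ T'.ncard) := by
  -- no arc enters s, no arc leaves t
  have hnoin : ∀ a : V, ¬ A a s := by
    intro a ha
    obtain ⟨l, hl, harc⟩ := hred.2 a s ha
    exact aux_no_arc_into_head hl.2 hl.1.2.2.1 harc
  have hnoout : ∀ b : V, ¬ A t b := by
    intro b hb
    obtain ⟨l, hl, harc⟩ := hred.2 t b hb
    exact aux_no_arc_out_last hl.2 hl.1.2.2.2 harc
  by_cases hst : s = t
  · -- degenerate case: every s-t dipath is [s], forced set is empty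
    subst hst
    have huniq : ∀ p : List V, IsDipath A s s p → p = [s] := by
      intro p hp
      obtain ⟨⟨hne, _, hh, hl⟩, hnd⟩ := hp
      cases p with
      | nil => exact absurd rfl hne
      | cons hd tl =>
        simp only [List.head?_cons, Option.some.injEq] at hh
        subst hh
        cases tl with
        | nil => rfl
        | cons b tl' =>
          exfalso
          have : (b :: tl').getLast? = some ((b :: tl').getLast (by simp)) :=
            List.getLast?_eq_getLast _
          rw [List.getLast?_cons_cons, this, Option.some.injEq] at hl
          rw [List.nodup_cons] at hnd
          exact hnd.1 (hl ▸ List.getLast_mem _)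
    have hFempty : diForcedSet A s s = ∅ := by
      ext x
      simp only [diForcedSet, Set.mem_setOf_eq, Set.mem_empty_iff_false, iff_false]
      rintro ⟨a, b, hab, -, -, l, hl, -, l1, l2, rfl⟩
      have := huniq _ hl
      have hlen : (l1 ++ a :: b :: l2).length = 1 := by rw [this]; rfl
      simp at hlen
      omega
    refine ⟨?_, ?_, ?_⟩
    · intro p q hp hq _
      rw [huniq p hp, huniq q hq]
    · intro T' _
      rw [hFempty]; exact Set.empty_subset _
    · intro T' _
      rw [hFempty]; simp
  · -- main case s ≠ t
    have hAst : A s t := (htour.2 s t hst).mpr (hnoin t)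
    have hpathst : IsDipath A s t [s, t] := by
      refine ⟨⟨by simp, ?_, rfl, rfl⟩, by simp [hst]⟩
      exact List.isChain_pair.mpr hAst
    have hinternal : ∀ x : V, x ≠ s → x ≠ t → A s x ∧ A x t := by
      intro x hxs hxt
      exact ⟨(htour.2 s x (Ne.symm hxs)).mpr (hnoin x),
        (htour.2 x t hxt).mpr (hnoout x)⟩
    have hinF : ∀ x : V, x ≠ s → x ≠ t → x ∈ diForcedSet A s t := by
      intro x hxs hxt
      obtain ⟨hsx, hxt'⟩ := hinternal x hxs hxt
      exact ⟨s, t, hAst, hsx, hxt', [s, t], hpathst, by simp [hxs, hxt], [], [], rfl⟩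
    have hFne : ∀ x ∈ diForcedSet A s t, x ≠ s ∧ x ≠ t := by
      rintro x ⟨a, b, hab, hax, hxb, -⟩
      constructor
      · rintro rfl; exact hnoin a hax
      · rintro rfl; exact hnoout b hxb
    -- tracking-set property
    have htrack : IsDiTrackingSet A s t (diForcedSet A s t) := by
      intro p q hp hq heq
      obtain ⟨mp, hpe, hps, hpt⟩ := aux_dipath_decomp hp hst
      obtain ⟨mq, hqe, hqs, hqt⟩ := aux_dipath_decomp hq hst
      set d : V → Bool := fun v => @decide (v ∈ diForcedSet A s t) (Classical.propDecidable _) with hd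
      have hfilt : ∀ m : List V, s ∉ m → t ∉ m →
          trackSeq (diForcedSet A s t) (s :: (m ++ [t])) =
            (List.filter d [s] ++ m) ++ List.filter d [t] := by
        intro m hms hmt
        have hmf : m.filter d = m := List.filter_eq_self.mpr (by
          intro v hv
          exact @decide_eq_true _ (Classical.propDecidable _)
            (hinF v (fun h => hms (h ▸ hv)) (fun h => hmt (h ▸ hv))))
        show List.filter d (s :: (m ++ [t])) = _
        rw [show s :: (m ++ [t]) = [s] ++ m ++ [t] by simp,
          List.filter_append, List.filter_append, hmf]
      rw [hpe, hqe, hfilt mp hps hpt, hfilt mq hqs hqt] at heq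
      have := List.append_cancel_left (List.append_cancel_right heq)
      rw [hpe, hqe, this]
    refine ⟨htrack, ?_, ?_⟩
    · -- every tracking set contains the forced set
      intro T' hT' x hx
      obtain ⟨hxs, hxt⟩ := hFne x hx
      obtain ⟨hsx, hxt'⟩ := hinternal x hxs hxt
      have hpathsxt : IsDipath A s t [s, x, t] := by
        refine ⟨⟨by simp, ?_, rfl, rfl⟩, ?_⟩
        · exact List.isChain_cons_cons.mpr ⟨hsx, List.isChain_pair.mpr hxt'⟩
        · simp [hst, hxs.symm, hxt]
      by_contra hxT'
      have hdx : @decide (x ∈ T') (Classical.propDecidable _) = false :=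
        @decide_eq_false _ (Classical.propDecidable _) hxT'
      have heq : trackSeq T' [s, t] = trackSeq T' [s, x, t] := by
        show List.filter _ [s, t] = List.filter _ [s, x, t]
        rw [show ([s, x, t] : List V) = [s] ++ [x] ++ [t] from rfl,
          show ([s, t] : List V) = [s] ++ [t] from rfl,
          List.filter_append, List.filter_append, List.filter_append]
        simp [hdx]
      have := hT' _ _ hpathst hpathsxt heq
      simp at this
    · -- minimality
      intro T' hT'
      have hsub : diForcedSet A s t ⊆ T' := by
        intro x hx
        obtain ⟨hxs, hxt⟩ := hFne x hx
        obtain ⟨hsx, hxt'⟩ := hinternal x hxs hxt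
        have hpathsxt : IsDipath A s t [s, x, t] := by
          refine ⟨⟨by simp, ?_, rfl, rfl⟩, ?_⟩
          · exact List.isChain_cons_cons.mpr ⟨hsx, List.isChain_pair.mpr hxt'⟩
          · simp [hst, hxs.symm, hxt]
        by_contra hxT'
        have hdx : @decide (x ∈ T') (Classical.propDecidable _) = false :=
          @decide_eq_false _ (Classical.propDecidable _) hxT'
        have heq : trackSeq T' [s, t] = trackSeq T' [s, x, t] := by
          show List.filter _ [s, t] = List.filter _ [s, x, t]
          rw [show ([s, x, t] : List V) = [s] ++ [x] ++ [t] from rfl,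
            show ([s, t] : List V) = [s] ++ [t] from rfl,
            List.filter_append, List.filter_append, List.filter_append]
          simp [hdx]
        have := hT' _ _ hpathst hpathsxt heq
        simp at this
      exact Set.ncard_le_ncard hsub (Set.toFinite T')
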